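/- Let s ∈ (0,1], let I ⊂ ℝ be a compact interval, let f, λ : I → ℝ be C¹ functions, and set M := sup_{x∈I}(|f'(x)| + |λ'(x)|). Let ψ be an approximating function with ∑_{q=1}^∞ ψ(q)^s q^{2−s} < ∞. For (a₀, a₁, a₂) ∈ ℤ³ define Δ(a₀,a₁,a₂) := {x ∈ I : |a₂ f(x) + a₁ x + a₀ + λ(x)| < ψ(max(|a₁|, |a₂|))}. Then ∑ |Δ(a₀,a₁,a₂)|^s < ∞, where the sum is over all triples (a₀, a₁, a₂) ∈ ℤ³ with a₁ ≠ 0 and |a₁| > 4M|a₂|, and |Δ(a₀,a₁,a₂)| denotes the Lebesgue measure of Δ(a₀,a₁,a₂). -/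

import Mathlib

open MeasureTheory Set

lemma tsum_int_natAbs_le (v : ℕ → ENNReal) :
    ∑' z : ℤ, v z.natAbs ≤ 2 * ∑' n : ℕ, v n := by
  have hsurj : Function.Surjective (fun p : Bool × ℕ => if p.1 then (p.2 : ℤ) else -(p.2 : ℤ)) := by
    intro z
    rcases le_or_gt 0 z with h | h
    · exact ⟨(true, z.toNat), by simp [Int.toNat_of_nonneg h]⟩
    · exact ⟨(false, (-z).toNat), by simp [Int.toNat_of_nonneg (by omega : (0:ℤ) ≤ -z)]⟩
  calc ∑' z : ℤ, v z.natAbs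
      ≤ ∑' p : Bool × ℕ, v ((if p.1 then (p.2 : ℤ) else -(p.2 : ℤ)).natAbs) :=
        ENNReal.tsum_le_tsum_comp_of_surjective hsurj _
    _ = ∑' (b : Bool) (n : ℕ), v ((if b then (n : ℤ) else -(n : ℤ)).natAbs) :=
        ENNReal.tsum_prod (f := fun (b : Bool) (n : ℕ) => v ((if b then (n : ℤ) else -(n : ℤ)).natAbs))
    _ = 2 * ∑' n : ℕ, v n := by
        rw [tsum_fintype]
        simp [two_mul]

lemma slope_lower_bound {g g' : ℝ → ℝ} {a b c : ℝ}
    (hg : ∀ x, HasDerivAt g (g' x) x)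
    (hg' : ∀ y ∈ Icc a b, c ≤ |g' y|)
    {u v : ℝ} (hu : u ∈ Icc a b) (hv : v ∈ Icc a b) (huv : u < v) :
    c * (v - u) ≤ |g v - g u| := by
  obtain ⟨w, hw, hslope⟩ := exists_hasDerivAt_eq_slope g g' huv
    (fun y _ => (hg y).continuousAt.continuousWithinAt) (fun y _ => hg y)
  have hwab : w ∈ Icc a b := ⟨le_trans hu.1 hw.1.le, le_trans hw.2.le hv.2⟩
  have h1 : c ≤ |g' w| := hg' w hwab
  have h2 : |g' w| * (v - u) = |g v - g u| := by
    rw [hslope, abs_div, abs_of_pos (by linarith : (0:ℝ) < v - u)]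
    rw [div_mul_cancel₀]
    linarith
  calc c * (v - u) ≤ |g' w| * (v - u) := by nlinarith [hg' w hwab]
    _ = |g v - g u| := h2

lemma meas_small_set {g g' : ℝ → ℝ} {a b c ε : ℝ} (hc : 0 < c) (hε : 0 ≤ ε)
    (hg : ∀ x, HasDerivAt g (g' x) x)
    (hg' : ∀ y ∈ Icc a b, c ≤ |g' y|) :
    volume {x ∈ Icc a b | |g x| < ε} ≤ ENNReal.ofReal (4 * ε / c) := by
  set S := {x ∈ Icc a b | |g x| < ε} with hS
  rcases S.eq_empty_or_nonempty with h | ⟨x₀, hx₀⟩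
  · rw [h]; simp
  have key : ∀ u ∈ S, ∀ v ∈ S, u < v → v - u ≤ 2 * ε / c := by
    intro u hu v hv huv
    have h1 := slope_lower_bound hg hg' hu.1 hv.1 huv
    have h2 : |g v - g u| ≤ |g v| + |g u| := abs_sub _ _
    have := hu.2; have := hv.2
    rw [le_div_iff₀ hc]
    nlinarith [hu.2, hv.2]
  have hsub : S ⊆ Icc (x₀ - 2 * ε / c) (x₀ + 2 * ε / c) := by
    intro x hx
    rcases lt_trichotomy x x₀ with h | h | h
    · have := key x hx x₀ hx₀ h
      constructor <;> [linarith; nlinarith [div_nonneg (by linarith : (0:ℝ) ≤ 2*ε) hc.le]]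
    · subst h; constructor <;> nlinarith [div_nonneg (by linarith : (0:ℝ) ≤ 2*ε) hc.le]
    · have := key x₀ hx₀ x hx h
      constructor <;> [nlinarith [div_nonneg (by linarith : (0:ℝ) ≤ 2*ε) hc.le]; linarith]
  calc volume S ≤ volume (Icc (x₀ - 2 * ε / c) (x₀ + 2 * ε / c)) := measure_mono hsub
    _ = ENNReal.ofReal (4 * ε / c) := by rw [Real.volume_Icc]; ring_nf

lemma slope_upper_bound {h h' : ℝ → ℝ} {a b K : ℝ}
    (hd : ∀ x, HasDerivAt h (h' x) x)
    (hK : ∀ y ∈ Icc a b, |h' y| ≤ K) (hab : a ≤ b)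
    {x : ℝ} (hx : x ∈ Icc a b) : |h x - h a| ≤ K * (b - a) := by
  have hK0 : 0 ≤ K := le_trans (abs_nonneg _) (hK a ⟨le_rfl, hab⟩)
  rcases eq_or_lt_of_le hx.1 with h | hax
  · rw [← h]; simp; nlinarith
  obtain ⟨w, hw, hslope⟩ := exists_hasDerivAt_eq_slope h h' hax
    (fun y _ => (hd y).continuousAt.continuousWithinAt) (fun y _ => hd y)
  have hwab : w ∈ Icc a b := ⟨hw.1.le, le_trans hw.2.le hx.2⟩
  have h2 : |h x - h a| = |h' w| * (x - a) := by
    rw [hslope, abs_div, abs_of_pos (by linarith : (0:ℝ) < x - a)]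
    rw [div_mul_cancel₀]
    linarith
  rw [h2]
  have := hK w hwab
  nlinarith [abs_nonneg (h' w), hx.2, hx.1]

set_option maxHeartbeats 2000000 in
theorem case_I_volume_sum_converges
    (s : ℝ) (hs0 : 0 < s) (hs1 : s ≤ 1)
    (a b : ℝ) (hab : a ≤ b)
    (f lam : ℝ → ℝ) (hf : ContDiff ℝ 1 f) (hlam : ContDiff ℝ 1 lam)
    (M : ℝ) (hM : M = sSup ((fun x => |deriv f x| + |deriv lam x|) '' Icc a b))
    (ψ : ℕ → ℝ) (hψpos : ∀ n, 0 < ψ n) (hψanti : Antitone ψ)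
    (hψ0 : Filter.Tendsto ψ Filter.atTop (nhds 0))
    (hsum : Summable fun q : ℕ => ψ q ^ s * (q : ℝ) ^ (2 - s))
    (Δ : ℤ × ℤ × ℤ → Set ℝ)
    (hΔ : ∀ t : ℤ × ℤ × ℤ, Δ t = {x ∈ Icc a b |
      |(t.2.2 : ℝ) * f x + (t.2.1 : ℝ) * x + (t.1 : ℝ) + lam x| <
        ψ (max t.2.1.natAbs t.2.2.natAbs)}) :
    ∑' p : {t : ℤ × ℤ × ℤ // t.2.1 ≠ 0 ∧ 4 * M * (|t.2.2| : ℝ) < (|t.2.1| : ℝ)},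
      (volume (Δ p.1)) ^ s < ⊤ := by
  classical
  have hab' : (0:ℝ) ≤ b - a := by linarith
  have hfd : ∀ y, HasDerivAt f (deriv f y) y := fun y => (hf.differentiable one_ne_zero y).hasDerivAt
  have hld : ∀ y, HasDerivAt lam (deriv lam y) y :=
    fun y => (hlam.differentiable one_ne_zero y).hasDerivAt
  have hfc : Continuous (deriv f) := hf.continuous_deriv le_rfl
  have hlc : Continuous (deriv lam) := hlam.continuous_deriv le_rfl
  have hMub : ∀ x ∈ Icc a b, |deriv f x| + |deriv lam x| ≤ M := by
    intro x hx
    rw [hM]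
    exact le_csSup (isCompact_Icc.image_of_continuousOn
      ((hfc.abs.add hlc.abs).continuousOn)).bddAbove ⟨x, hx, rfl⟩
  have hM0 : 0 ≤ M :=
    le_trans (by positivity) (hMub a ⟨le_rfl, hab⟩)
  obtain ⟨Λ, hΛ⟩ := isCompact_Icc.exists_bound_of_continuousOn
    (s := Icc a b) hlam.continuous.continuousOn
  set X : ℝ := max |a| |b| with hX
  have hXx : ∀ x ∈ Icc a b, |x| ≤ X := by
    intro x hx
    rw [abs_le]
    refine ⟨?_, ?_⟩
    · have h1 : -X ≤ -|a| := by simp [hX]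
      have := neg_abs_le a
      have := hx.1
      linarith
    · have h1 : |b| ≤ X := le_max_right _ _
      have := le_abs_self b
      have := hx.2
      linarith
  -- derivative builder
  have hder : ∀ (c₂ c₁ c₀ : ℝ) (y : ℝ),
      HasDerivAt (fun x => c₂ * f x + c₁ * x + c₀ + lam x)
        (c₂ * deriv f y + c₁ + deriv lam y) y := by
    intro c₂ c₁ c₀ y
    have h := ((((hfd y).const_mul c₂).add ((hasDerivAt_id y).const_mul c₁)).add_const c₀).add
      (hld y)
    simp only [mul_one] at h
    exact h
  set q : ℤ × ℤ × ℤ → ℕ := fun t => max t.2.1.natAbs t.2.2.natAbs with hqdef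
  have hΔ' : ∀ t, Δ t = {x ∈ Icc a b |
      |(t.2.2 : ℝ) * f x + (t.2.1 : ℝ) * x + (t.1 : ℝ) + lam x| < ψ (q t)} := hΔ
  -- derivative bounds in the regime
  have hglb : ∀ (a₁ a₂ : ℤ), 4*M*|(a₂:ℝ)| < |(a₁:ℝ)| → 2*M < |(a₁:ℝ)| → ∀ y ∈ Icc a b,
      |(a₁:ℝ)|/4 ≤ |(a₂:ℝ) * deriv f y + (a₁:ℝ) + deriv lam y| ∧
      |(a₂:ℝ) * deriv f y + (a₁:ℝ) + deriv lam y| ≤ 2*|(a₁:ℝ)| := by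
    intro a₁ a₂ h4 h2 y hy
    have hM' := hMub y hy
    have hf' : |deriv f y| ≤ M := by
      have := abs_nonneg (deriv lam y); linarith
    have hl' : |deriv lam y| ≤ M := by
      have := abs_nonneg (deriv f y); linarith
    have habs : |(a₂:ℝ) * deriv f y + deriv lam y| ≤ |(a₂:ℝ)| * M + M := by
      calc |(a₂:ℝ) * deriv f y + deriv lam y| ≤ |(a₂:ℝ) * deriv f y| + |deriv lam y| :=
            abs_add_le _ _
        _ = |(a₂:ℝ)| * |deriv f y| + |deriv lam y| := by rw [abs_mul]
        _ ≤ |(a₂:ℝ)| * M + M := by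
            have := abs_nonneg (a₂:ℝ)
            nlinarith
    have he : (a₂:ℝ) * deriv f y + (a₁:ℝ) + deriv lam y
        = ((a₂:ℝ) * deriv f y + deriv lam y) + (a₁:ℝ) := by ring
    rw [he]
    set x := (a₂:ℝ) * deriv f y + deriv lam y with hx
    have low : |(a₁:ℝ)| - |x| ≤ |x + (a₁:ℝ)| := by
      have h0 : |(a₁:ℝ)| ≤ |x + (a₁:ℝ)| + |x| := by
        calc |(a₁:ℝ)| = |x + (a₁:ℝ) - x| := by rw [add_sub_cancel_left]
          _ ≤ |x + (a₁:ℝ)| + |x| := abs_sub _ _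
      linarith
    have up : |x + (a₁:ℝ)| ≤ |x| + |(a₁:ℝ)| := abs_add_le _ _
    constructor
    · linarith
    · linarith
  -- volume bound in the regime
  have hvol : ∀ t : ℤ × ℤ × ℤ, 4*M*|(t.2.2:ℝ)| < |(t.2.1:ℝ)| → 2*M < |(t.2.1:ℝ)| →
      volume (Δ t) ≤ ENNReal.ofReal (16 * ψ (q t) / |(t.2.1:ℝ)|) := by
    intro t h4 h2
    have ha₁pos : 0 < |(t.2.1:ℝ)| := by linarith
    have hm := meas_small_set (a := a) (b := b)
      (g := fun x => (t.2.2:ℝ) * f x + (t.2.1:ℝ) * x + (t.1:ℝ) + lam x)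
      (g' := fun y => (t.2.2:ℝ) * deriv f y + (t.2.1:ℝ) + deriv lam y)
      (c := |(t.2.1:ℝ)|/4) (ε := ψ (q t)) (by positivity) (hψpos _).le
      (fun y => hder _ _ _ y) (fun y hy => (hglb _ _ h4 h2 y hy).1)
    rw [hΔ' t]
    refine le_trans hm (le_of_eq ?_)
    congr 1
    field_simp
    ring
  -- a₀ localization in the regime
  have ha₀mem : ∀ (a₀ a₁ a₂ : ℤ), 4*M*|(a₂:ℝ)| < |(a₁:ℝ)| → 2*M < |(a₁:ℝ)| →
      (Δ (a₀, a₁, a₂)).Nonempty →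
      |(a₀:ℝ) + ((a₂:ℝ) * f a + (a₁:ℝ) * a + lam a)| ≤ 2 * |(a₁:ℝ)| * (b-a) + ψ 0 := by
    intro a₀ a₁ a₂ h4 h2 hne
    obtain ⟨x, hx⟩ := hne
    rw [hΔ' (a₀, a₁, a₂)] at hx
    obtain ⟨hxab, hxlt⟩ := hx
    have hψq : ψ (q (a₀, a₁, a₂)) ≤ ψ 0 := hψanti (Nat.zero_le _)
    have hup := slope_upper_bound (a := a) (b := b)
      (h := fun x => (a₂:ℝ) * f x + (a₁:ℝ) * x + (0:ℝ) + lam x)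
      (h' := fun y => (a₂:ℝ) * deriv f y + (a₁:ℝ) + deriv lam y)
      (fun y => hder _ _ _ y)
      (fun y hy => (hglb a₁ a₂ h4 h2 y hy).2) hab hxab
    have key : |(a₀:ℝ) + ((a₂:ℝ) * f a + (a₁:ℝ) * a + lam a)|
        ≤ |(a₂:ℝ) * f x + (a₁:ℝ) * x + (a₀:ℝ) + lam x|
          + |((a₂:ℝ) * f x + (a₁:ℝ) * x + 0 + lam x)
              - ((a₂:ℝ) * f a + (a₁:ℝ) * a + 0 + lam a)| := by
      calc |(a₀:ℝ) + ((a₂:ℝ) * f a + (a₁:ℝ) * a + lam a)|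
          = |((a₂:ℝ) * f x + (a₁:ℝ) * x + (a₀:ℝ) + lam x)
              - (((a₂:ℝ) * f x + (a₁:ℝ) * x + 0 + lam x)
                - ((a₂:ℝ) * f a + (a₁:ℝ) * a + 0 + lam a))| := by congr 1; ring
        _ ≤ _ + _ := abs_sub _ _
    linarith
  -- the two majorant functions
  set G₁ : ℤ × ℤ × ℤ → ENNReal := fun t =>
    if (Δ t).Nonempty ∧ t.2.2 = 0 ∧ |(t.2.1:ℝ)| ≤ 2*M then ENNReal.ofReal (b-a) ^ s else 0
    with hG₁def
  set G₂ : ℤ × ℤ × ℤ → ENNReal := fun t =>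
    if (Δ t).Nonempty ∧ t.2.1 ≠ 0 ∧ 4*M*|(t.2.2:ℝ)| < |(t.2.1:ℝ)| ∧ 2*M < |(t.2.1:ℝ)|
    then ENNReal.ofReal (16 * ψ (q t) / |(t.2.1:ℝ)|) ^ s else 0
    with hG₂def
  -- pointwise bound on the subtype
  have hpt : ∀ p : {t : ℤ × ℤ × ℤ // t.2.1 ≠ 0 ∧ 4 * M * (|t.2.2| : ℝ) < (|t.2.1| : ℝ)},
      (volume (Δ p.1)) ^ s ≤ G₁ p.1 + G₂ p.1 := by
    intro p
    obtain ⟨hne0, h4'⟩ := p.2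
    have h4 : 4*M*|((p.1.2.2 : ℤ):ℝ)| < |((p.1.2.1 : ℤ):ℝ)| := by push_cast at h4' ⊢; exact h4'
    rcases (Δ p.1).eq_empty_or_nonempty with hemp | hne
    · rw [hemp, measure_empty, ENNReal.zero_rpow_of_pos hs0]
      exact zero_le
    rcases le_or_gt |((p.1.2.1 : ℤ):ℝ)| (2*M) with hle | hgt
    · have h20 : p.1.2.2 = 0 := by
        by_contra hne2
        have h1 : (1:ℝ) ≤ |((p.1.2.2 : ℤ):ℝ)| := by
          have := Int.one_le_abs (by exact_mod_cast hne2)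
          exact_mod_cast this
        nlinarith
      have hG₁ : G₁ p.1 = ENNReal.ofReal (b-a) ^ s := by
        rw [hG₁def]
        exact if_pos ⟨hne, h20, hle⟩
      have hv : volume (Δ p.1) ≤ ENNReal.ofReal (b-a) := by
        rw [hΔ' p.1, ← Real.volume_Icc]
        exact measure_mono (fun x hx => hx.1)
      calc (volume (Δ p.1)) ^ s ≤ ENNReal.ofReal (b-a) ^ s := ENNReal.rpow_le_rpow hv hs0.le
        _ = G₁ p.1 := hG₁.symm
        _ ≤ G₁ p.1 + G₂ p.1 := le_self_add
    · have hG₂ : G₂ p.1 = ENNReal.ofReal (16 * ψ (q p.1) / |((p.1.2.1 : ℤ):ℝ)|) ^ s := by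
        rw [hG₂def]
        exact if_pos ⟨hne, hne0, h4, hgt⟩
      calc (volume (Δ p.1)) ^ s
          ≤ ENNReal.ofReal (16 * ψ (q p.1) / |((p.1.2.1 : ℤ):ℝ)|) ^ s :=
            ENNReal.rpow_le_rpow (hvol p.1 h4 hgt) hs0.le
        _ = G₂ p.1 := hG₂.symm
        _ ≤ G₁ p.1 + G₂ p.1 := le_add_self
  -- G₁ has finite sum
  have hG₁sum : ∑' t : ℤ × ℤ × ℤ, G₁ t < ⊤ := by
    set N₀ : ℤ := ⌈ψ 0 + 2*M*X + Λ⌉ with hN₀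
    set N₁ : ℤ := ⌈2*M⌉ with hN₁
    set s₁ : Finset (ℤ × ℤ × ℤ) :=
      (Finset.Icc (-N₀) N₀) ×ˢ ((Finset.Icc (-N₁) N₁) ×ˢ (Finset.Icc (0:ℤ) 0)) with hs₁
    have hz : ∀ t ∉ s₁, G₁ t = 0 := by
      intro t ht
      simp only [hG₁def]
      split_ifs with hcond
      · exfalso
        obtain ⟨⟨x, hx⟩, h20, h2M⟩ := hcond
        rw [hΔ' t] at hx
        obtain ⟨hxab, hxlt⟩ := hx
        have hψq : ψ (q t) ≤ ψ 0 := hψanti (Nat.zero_le _)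
        have h22 : ((t.2.2 : ℤ):ℝ) = 0 := by rw [h20]; simp
        have hb1 : |(t.1:ℝ)| ≤ |(t.2.2:ℝ) * f x + (t.2.1:ℝ) * x + (t.1:ℝ) + lam x|
            + |(t.2.2:ℝ) * f x + (t.2.1:ℝ) * x + lam x| := by
          calc |(t.1:ℝ)| = |((t.2.2:ℝ) * f x + (t.2.1:ℝ) * x + (t.1:ℝ) + lam x)
              - ((t.2.2:ℝ) * f x + (t.2.1:ℝ) * x + lam x)| := by congr 1; ring
            _ ≤ _ + _ := abs_sub _ _
        have hb2 : |(t.2.2:ℝ) * f x + (t.2.1:ℝ) * x + lam x| ≤ 2*M*X + Λ := by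
          have e : (t.2.2:ℝ) * f x + (t.2.1:ℝ) * x + lam x = (t.2.1:ℝ) * x + lam x := by
            rw [h22]; ring
          rw [e]
          have hx' := hXx x hxab
          have hlx := hΛ x hxab
          rw [Real.norm_eq_abs] at hlx
          calc |(t.2.1:ℝ) * x + lam x| ≤ |(t.2.1:ℝ) * x| + |lam x| := abs_add_le _ _
            _ = |(t.2.1:ℝ)| * |x| + |lam x| := by rw [abs_mul]
            _ ≤ 2*M*X + Λ := by
                nlinarith [abs_nonneg x, abs_nonneg ((t.2.1:ℤ):ℝ), hM0,
                  le_trans (abs_nonneg x) hx']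
        have hb0 : |(t.1:ℝ)| ≤ ψ 0 + 2*M*X + Λ := by linarith
        apply ht
        rw [hs₁]
        simp only [Finset.mem_product, Finset.mem_Icc]
        refine ⟨?_, ?_, ?_⟩
        · have : ((|t.1| : ℤ) : ℝ) ≤ ψ 0 + 2*M*X + Λ := by push_cast; exact hb0
          have hN : (|t.1| : ℤ) ≤ N₀ := by
            rw [hN₀]; exact_mod_cast le_trans this (Int.le_ceil _)
          rw [abs_le] at hN
          exact ⟨hN.1, hN.2⟩
        · have : ((|t.2.1| : ℤ) : ℝ) ≤ 2*M := by push_cast; exact h2M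
          have hN : (|t.2.1| : ℤ) ≤ N₁ := by
            rw [hN₁]; exact_mod_cast le_trans this (Int.le_ceil _)
          rw [abs_le] at hN
          exact ⟨hN.1, hN.2⟩
        · exact ⟨le_of_eq h20.symm, le_of_eq h20⟩
      · rfl
    rw [tsum_eq_sum hz]
    refine ENNReal.sum_lt_top.mpr (fun t _ => ?_)
    simp only [hG₁def]
    split_ifs
    · exact ENNReal.rpow_lt_top_of_nonneg hs0.le ENNReal.ofReal_ne_top
    · exact ENNReal.zero_ne_top.lt_top
  -- G₂ has finite sum
  have hG₂sum : ∑' t : ℤ × ℤ × ℤ, G₂ t < ⊤ := by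
    set c₃ : ℝ := 16 * (4*(b-a) + 2*ψ 0 + 1) with hc₃
    have hc₃0 : (0:ℝ) ≤ c₃ := by
      have := hψpos 0
      rw [hc₃]; nlinarith
    set u : ℕ → ℕ → ENNReal := fun n m =>
      if n = 0 then 0 else ENNReal.ofReal (c₃ * (n:ℝ)^(1-s) * ψ (max n m) ^ s) with hu
    have hinner : ∀ a₁ a₂ : ℤ, ∑' a₀ : ℤ, G₂ (a₀, a₁, a₂) ≤ u a₁.natAbs a₂.natAbs := by
      intro a₁ a₂
      by_cases hreg : a₁ ≠ 0 ∧ 4*M*|(a₂:ℝ)| < |(a₁:ℝ)| ∧ 2*M < |(a₁:ℝ)|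
      case neg =>
        have hzero : ∀ a₀ : ℤ, G₂ (a₀, a₁, a₂) = 0 := by
          intro a₀
          simp only [hG₂def]
          split_ifs with h
          · exact absurd ⟨h.2.1, h.2.2.1, h.2.2.2⟩ hreg
          · rfl
        simp only [hzero, tsum_zero]
        exact zero_le
      case pos =>
      obtain ⟨h0, h4, h2⟩ := hreg
      set n : ℝ := (a₁.natAbs : ℝ) with hn
      have hneq : |(a₁:ℝ)| = n := by rw [hn]; push_cast [Nat.cast_natAbs]; ring
      have hn1 : (1:ℝ) ≤ n := by
        rw [hn]; exact_mod_cast Int.natAbs_pos.mpr h0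
      have hn0 : (0:ℝ) < n := lt_of_lt_of_le zero_lt_one hn1
      set D : ℝ := 2 * |(a₁:ℝ)| * (b-a) + ψ 0 with hD
      have hD0 : (0:ℝ) ≤ D := by
        have h1 := hψpos 0
        have h2'' : (0:ℝ) ≤ 2 * |(a₁:ℝ)| * (b-a) := by positivity
        rw [hD]; linarith
      set ca : ℝ := (a₂:ℝ) * f a + (a₁:ℝ) * a + lam a with hca
      set s₀ : Finset ℤ := Finset.Icc ⌈-ca - D⌉ ⌊-ca + D⌋ with hs₀
      have hz : ∀ a₀ ∉ s₀, G₂ (a₀, a₁, a₂) = 0 := by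
        intro a₀ ha₀
        simp only [hG₂def]
        split_ifs with h
        · exfalso
          obtain ⟨hne, -, h4', h2'⟩ := h
          have hmem := ha₀mem a₀ a₁ a₂ h4' h2' hne
          apply ha₀
          rw [hs₀, Finset.mem_Icc]
          obtain ⟨hl, hr⟩ := abs_le.mp hmem
          constructor
          · apply Int.ceil_le.mpr
            rw [hca, hD]
            push_cast
            linarith
          · apply Int.le_floor.mpr
            rw [hca, hD]
            push_cast
            linarith
        · rfl
      rw [tsum_eq_sum hz]
      set V : ℝ := (16 * ψ (max a₁.natAbs a₂.natAbs) / |(a₁:ℝ)|) ^ s with hV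
      have hψmax : (0:ℝ) ≤ 16 * ψ (max a₁.natAbs a₂.natAbs) :=
        by linarith [hψpos (max a₁.natAbs a₂.natAbs)]
      have hV0 : (0:ℝ) ≤ V := by
        rw [hV]
        exact Real.rpow_nonneg (div_nonneg hψmax (abs_nonneg _)) s
      have hbound : ∀ a₀ ∈ s₀, G₂ (a₀, a₁, a₂) ≤ ENNReal.ofReal V := by
        intro a₀ _
        simp only [hG₂def]
        split_ifs with h
        · rw [hV, ← ENNReal.ofReal_rpow_of_nonneg (div_nonneg hψmax (abs_nonneg _)) hs0.le]
        · exact zero_le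
      have hcard : ((s₀.card : ℕ) : ℝ) ≤ 2*D + 1 := by
        rw [hs₀, Int.card_Icc]
        rcases le_or_gt (⌊-ca + D⌋ + 1 - ⌈-ca - D⌉) 0 with hh | hh
        · rw [Int.toNat_of_nonpos hh]
          norm_num
          linarith
        · have e : (((⌊-ca + D⌋ + 1 - ⌈-ca - D⌉).toNat : ℕ) : ℝ)
              = ((⌊-ca + D⌋ + 1 - ⌈-ca - D⌉ : ℤ) : ℝ) := by
            exact_mod_cast congrArg (fun z : ℤ => (z : ℝ)) (Int.toNat_of_nonneg hh.le)
          rw [e]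
          push_cast
          have h1 := Int.le_ceil (-ca - D)
          have h2' := Int.floor_le (-ca + D)
          linarith
      calc ∑ a₀ ∈ s₀, G₂ (a₀, a₁, a₂) ≤ s₀.card • ENNReal.ofReal V :=
            Finset.sum_le_card_nsmul _ _ _ hbound
        _ = (s₀.card : ENNReal) * ENNReal.ofReal V := nsmul_eq_mul _ _
        _ = ENNReal.ofReal (s₀.card) * ENNReal.ofReal V := by rw [ENNReal.ofReal_natCast]
        _ ≤ ENNReal.ofReal (2*D+1) * ENNReal.ofReal V :=
            mul_le_mul_left (ENNReal.ofReal_le_ofReal hcard) _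
        _ = ENNReal.ofReal ((2*D+1) * V) := (ENNReal.ofReal_mul (by linarith)).symm
        _ ≤ u a₁.natAbs a₂.natAbs := by
            rw [hu]
            simp only
            rw [if_neg (Int.natAbs_ne_zero.mpr h0)]
            apply ENNReal.ofReal_le_ofReal
            have e1 : V = 16^s * ψ (max a₁.natAbs a₂.natAbs) ^ s / n^s := by
              rw [hV, hneq, Real.div_rpow hψmax hn0.le,
                Real.mul_rpow (by norm_num) (hψpos _).le]
            have e2 : (16:ℝ)^s ≤ 16 := by
              calc (16:ℝ)^s ≤ 16^(1:ℝ) :=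
                    Real.rpow_le_rpow_of_exponent_le (by norm_num) hs1
                _ = 16 := Real.rpow_one _
            have e3 : n^(1-s) = n / n^s := by rw [Real.rpow_sub hn0, Real.rpow_one]
            have hDle : 2*D + 1 ≤ n * (c₃/16) := by
              rw [hD, hc₃, hneq]
              have := hψpos 0
              nlinarith
            have h16s : (0:ℝ) < 16^s := Real.rpow_pos_of_pos (by norm_num) s
            have hkey : (2*D+1) * 16^s ≤ c₃ * n := by
              calc (2*D+1) * 16^s ≤ (n * (c₃/16)) * 16 :=
                    mul_le_mul hDle e2 h16s.le (by positivity)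
                _ = c₃ * n := by ring
            have hψs : (0:ℝ) ≤ ψ (max a₁.natAbs a₂.natAbs) ^ s :=
              Real.rpow_nonneg (hψpos _).le s
            have hns : (0:ℝ) < n^s := Real.rpow_pos_of_pos hn0 s
            rw [e1, e3]
            calc (2*D+1) * (16^s * ψ (max a₁.natAbs a₂.natAbs) ^ s / n^s)
                = ((2*D+1) * 16^s) * (ψ (max a₁.natAbs a₂.natAbs) ^ s / n^s) := by ring
              _ ≤ (c₃ * n) * (ψ (max a₁.natAbs a₂.natAbs) ^ s / n^s) :=
                  mul_le_mul_of_nonneg_right hkey (by positivity)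
              _ = c₃ * (n / n^s) * ψ (max a₁.natAbs a₂.natAbs) ^ s := by ring
    -- reorder the triple sum
    have h1 : ∑' t : ℤ × ℤ × ℤ, G₂ t = ∑' (a₀ : ℤ) (p : ℤ × ℤ), G₂ (a₀, p) :=
      ENNReal.tsum_prod (f := fun a₀ p => G₂ (a₀, p))
    have h2 : ∀ a₀ : ℤ, ∑' (p : ℤ × ℤ), G₂ (a₀, p) = ∑' (a₁ : ℤ) (a₂ : ℤ), G₂ (a₀, a₁, a₂) :=
      fun a₀ => ENNReal.tsum_prod (f := fun a₁ a₂ => G₂ (a₀, a₁, a₂))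
    have h3 : ∑' t : ℤ × ℤ × ℤ, G₂ t = ∑' (a₁ : ℤ) (a₂ : ℤ) (a₀ : ℤ), G₂ (a₀, a₁, a₂) := by
      rw [h1, tsum_congr h2,
        ENNReal.tsum_comm (f := fun a₀ a₁ => ∑' a₂ : ℤ, G₂ (a₀, a₁, a₂))]
      exact tsum_congr (fun a₁ => ENNReal.tsum_comm (f := fun a₀ a₂ => G₂ (a₀, a₁, a₂)))
    -- final finite bound over ℕ²
    have hfin : ∑' (n' : ℕ) (m : ℕ), u n' m < ⊤ := by
      set A : ℕ → ℕ → ENNReal := fun n' m =>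
        if 1 ≤ n' ∧ m ≤ n' then ENNReal.ofReal (c₃ * (n':ℝ)^(1-s) * ψ n' ^ s) else 0 with hA
      set B : ℕ → ℕ → ENNReal := fun n' m =>
        if 1 ≤ n' ∧ n' < m then ENNReal.ofReal (c₃ * (n':ℝ)^(1-s) * ψ m ^ s) else 0 with hB
      have hAB : ∀ n' m : ℕ, u n' m ≤ A n' m + B n' m := by
        intro n' m
        simp only [hu, hA, hB]
        rcases Nat.eq_zero_or_pos n' with h | h
        · simp [h]
        · rw [if_neg (by omega)]
          rcases le_or_gt m n' with hmn | hmn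
          · rw [if_pos ⟨h, hmn⟩, if_neg (by omega), max_eq_left hmn]
            simp
          · rw [if_neg (by omega), if_pos ⟨h, hmn⟩, max_eq_right hmn.le]
            simp
      have hrpow_mul : ∀ k : ℕ, 1 ≤ k → ((k:ℝ))^(1-s) * (k:ℝ) = (k:ℝ)^(2-s) := by
        intro k hk
        have hk0 : (0:ℝ) < k := by exact_mod_cast hk
        have h := Real.rpow_add hk0 (1-s) 1
        rw [Real.rpow_one] at h
        rw [show (2:ℝ)-s = (1-s)+1 by ring, h]
      have hAfin : ∑' (n' : ℕ) (m : ℕ), A n' m < ⊤ := by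
        have hle : ∀ n' : ℕ,
            ∑' m : ℕ, A n' m ≤ ENNReal.ofReal (2*c₃ * (ψ n' ^ s * (n':ℝ)^(2-s))) := by
          intro n'
          rcases Nat.eq_zero_or_pos n' with h | h
          · subst h
            simp [hA]
          · have hzA : ∀ m ∉ Finset.range (n'+1), A n' m = 0 := by
              intro m hm
              simp only [hA]
              rw [if_neg]
              rintro ⟨-, hmn⟩
              exact hm (Finset.mem_range.mpr (by omega))
            rw [tsum_eq_sum hzA]
            have hψs := Real.rpow_nonneg (hψpos n').le s
            have hr1 : (0:ℝ) ≤ (n':ℝ)^(1-s) := Real.rpow_nonneg (Nat.cast_nonneg n') _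
            have hb : ∀ m ∈ Finset.range (n'+1),
                A n' m ≤ ENNReal.ofReal (c₃ * (n':ℝ)^(1-s) * ψ n' ^ s) := by
              intro m _
              simp only [hA]
              split_ifs
              · exact le_refl _
              · exact zero_le
            calc ∑ m ∈ Finset.range (n'+1), A n' m
                ≤ (Finset.range (n'+1)).card •
                    ENNReal.ofReal (c₃ * (n':ℝ)^(1-s) * ψ n' ^ s) :=
                  Finset.sum_le_card_nsmul _ _ _ hb
              _ = ((n'+1 : ℕ) : ENNReal) * ENNReal.ofReal (c₃ * (n':ℝ)^(1-s) * ψ n' ^ s) := by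
                  rw [Finset.card_range, nsmul_eq_mul]
              _ = ENNReal.ofReal (((n'+1 : ℕ):ℝ) * (c₃ * (n':ℝ)^(1-s) * ψ n' ^ s)) := by
                  rw [← ENNReal.ofReal_natCast (n'+1),
                    ← ENNReal.ofReal_mul (by positivity)]
              _ ≤ ENNReal.ofReal (2*c₃ * (ψ n' ^ s * (n':ℝ)^(2-s))) := by
                  apply ENNReal.ofReal_le_ofReal
                  have hn1' : (1:ℝ) ≤ (n':ℝ) := by exact_mod_cast h
                  have hcast : ((n'+1:ℕ):ℝ) ≤ 2*(n':ℝ) := by push_cast; linarith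
                  calc ((n'+1:ℕ):ℝ) * (c₃ * (n':ℝ)^(1-s) * ψ n' ^ s)
                      ≤ (2*(n':ℝ)) * (c₃ * (n':ℝ)^(1-s) * ψ n' ^ s) :=
                        mul_le_mul_of_nonneg_right hcast
                          (mul_nonneg (mul_nonneg hc₃0 hr1) hψs)
                    _ = 2*c₃ * (ψ n' ^ s * ((n':ℝ)^(1-s) * (n':ℝ))) := by ring
                    _ = 2*c₃ * (ψ n' ^ s * (n':ℝ)^(2-s)) := by rw [hrpow_mul n' h]
        have hsum2 : Summable (fun n' : ℕ => 2*c₃ * (ψ n' ^ s * (n':ℝ)^(2-s))) :=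
          hsum.mul_left _
        calc ∑' (n' : ℕ) (m : ℕ), A n' m
            ≤ ∑' n' : ℕ, ENNReal.ofReal (2*c₃ * (ψ n' ^ s * (n':ℝ)^(2-s))) :=
              ENNReal.tsum_le_tsum hle
          _ = ENNReal.ofReal (∑' n' : ℕ, 2*c₃ * (ψ n' ^ s * (n':ℝ)^(2-s))) :=
              (ENNReal.ofReal_tsum_of_nonneg (fun n' => by
                have hψs := Real.rpow_nonneg (hψpos n').le s
                have : (0:ℝ) ≤ (n':ℝ)^(2-s) := Real.rpow_nonneg (Nat.cast_nonneg n') _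
                positivity) hsum2).symm
          _ < ⊤ := ENNReal.ofReal_lt_top
      have hBfin : ∑' (n' : ℕ) (m : ℕ), B n' m < ⊤ := by
        rw [ENNReal.tsum_comm (f := fun n' m => B n' m)]
        have hle : ∀ m : ℕ,
            ∑' n' : ℕ, B n' m ≤ ENNReal.ofReal (2*c₃ * (ψ m ^ s * (m:ℝ)^(2-s))) := by
          intro m
          have hψs := Real.rpow_nonneg (hψpos m).le s
          have hrm : (0:ℝ) ≤ (m:ℝ)^(1-s) := Real.rpow_nonneg (Nat.cast_nonneg m) _
          have hzB : ∀ n' ∉ Finset.range m, B n' m = 0 := by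
            intro n' hn'
            simp only [hB]
            rw [if_neg]
            rintro ⟨-, hmn⟩
            exact hn' (Finset.mem_range.mpr hmn)
          rw [tsum_eq_sum hzB]
          rcases Nat.eq_zero_or_pos m with h | h
          · subst h
            simp
          · have hb : ∀ n' ∈ Finset.range m,
                B n' m ≤ ENNReal.ofReal (c₃ * (m:ℝ)^(1-s) * ψ m ^ s) := by
              intro n' hn'
              simp only [hB]
              split_ifs with hcnd
              · apply ENNReal.ofReal_le_ofReal
                have hcast : ((n':ℝ)) ≤ (m:ℝ) := by
                  exact_mod_cast (Finset.mem_range.mp hn').le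
                have : ((n':ℝ))^(1-s) ≤ (m:ℝ)^(1-s) :=
                  Real.rpow_le_rpow (Nat.cast_nonneg n') hcast (by linarith)
                have h1 : (0:ℝ) ≤ ψ m ^ s := hψs
                nlinarith [mul_nonneg hc₃0 h1]
              · exact zero_le
            calc ∑ n' ∈ Finset.range m, B n' m
                ≤ (Finset.range m).card • ENNReal.ofReal (c₃ * (m:ℝ)^(1-s) * ψ m ^ s) :=
                  Finset.sum_le_card_nsmul _ _ _ hb
              _ = ((m : ℕ) : ENNReal) * ENNReal.ofReal (c₃ * (m:ℝ)^(1-s) * ψ m ^ s) := by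
                  rw [Finset.card_range, nsmul_eq_mul]
              _ = ENNReal.ofReal ((m:ℝ) * (c₃ * (m:ℝ)^(1-s) * ψ m ^ s)) := by
                  rw [← ENNReal.ofReal_natCast m, ← ENNReal.ofReal_mul (by positivity)]
              _ ≤ ENNReal.ofReal (2*c₃ * (ψ m ^ s * (m:ℝ)^(2-s))) := by
                  apply ENNReal.ofReal_le_ofReal
                  calc (m:ℝ) * (c₃ * (m:ℝ)^(1-s) * ψ m ^ s)
                      = c₃ * (ψ m ^ s * ((m:ℝ)^(1-s) * (m:ℝ))) := by ring
                    _ = c₃ * (ψ m ^ s * (m:ℝ)^(2-s)) := by rw [hrpow_mul m h]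
                    _ ≤ 2*c₃ * (ψ m ^ s * (m:ℝ)^(2-s)) := by
                        have h2s : (0:ℝ) ≤ (m:ℝ)^(2-s) := Real.rpow_nonneg (Nat.cast_nonneg m) _
                        nlinarith [mul_nonneg hc₃0 (mul_nonneg hψs h2s)]
        have hsum2 : Summable (fun m : ℕ => 2*c₃ * (ψ m ^ s * (m:ℝ)^(2-s))) :=
          hsum.mul_left _
        calc ∑' (m : ℕ) (n' : ℕ), B n' m
            ≤ ∑' m : ℕ, ENNReal.ofReal (2*c₃ * (ψ m ^ s * (m:ℝ)^(2-s))) :=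
              ENNReal.tsum_le_tsum hle
          _ = ENNReal.ofReal (∑' m : ℕ, 2*c₃ * (ψ m ^ s * (m:ℝ)^(2-s))) :=
              (ENNReal.ofReal_tsum_of_nonneg (fun m => by
                have hψs := Real.rpow_nonneg (hψpos m).le s
                have : (0:ℝ) ≤ (m:ℝ)^(2-s) := Real.rpow_nonneg (Nat.cast_nonneg m) _
                positivity) hsum2).symm
          _ < ⊤ := ENNReal.ofReal_lt_top
      calc ∑' (n' : ℕ) (m : ℕ), u n' m
          ≤ ∑' (n' : ℕ) (m : ℕ), (A n' m + B n' m) :=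
            ENNReal.tsum_le_tsum (fun n' => ENNReal.tsum_le_tsum (fun m => hAB n' m))
        _ = ∑' (n' : ℕ), (∑' m : ℕ, A n' m + ∑' m : ℕ, B n' m) :=
            tsum_congr (fun n' => ENNReal.tsum_add)
        _ = ∑' (n' : ℕ) (m : ℕ), A n' m + ∑' (n' : ℕ) (m : ℕ), B n' m := ENNReal.tsum_add
        _ < ⊤ := ENNReal.add_lt_top.mpr ⟨hAfin, hBfin⟩
    calc ∑' t : ℤ × ℤ × ℤ, G₂ t = ∑' (a₁ : ℤ) (a₂ : ℤ) (a₀ : ℤ), G₂ (a₀, a₁, a₂) := h3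
      _ ≤ ∑' (a₁ : ℤ) (a₂ : ℤ), u a₁.natAbs a₂.natAbs :=
          ENNReal.tsum_le_tsum (fun a₁ => ENNReal.tsum_le_tsum (fun a₂ => hinner a₁ a₂))
      _ ≤ ∑' (a₁ : ℤ), 2 * ∑' (m : ℕ), u a₁.natAbs m :=
          ENNReal.tsum_le_tsum (fun a₁ => tsum_int_natAbs_le (u a₁.natAbs))
      _ = 2 * ∑' (a₁ : ℤ), ∑' (m : ℕ), u a₁.natAbs m := ENNReal.tsum_mul_left
      _ ≤ 2 * (2 * ∑' (n' : ℕ) (m : ℕ), u n' m) :=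
          mul_le_mul_right (tsum_int_natAbs_le (fun n' => ∑' m : ℕ, u n' m)) 2
      _ < ⊤ := by
          refine ENNReal.mul_lt_top ?_ (ENNReal.mul_lt_top ?_ hfin)
          · exact (by norm_num : (2:ENNReal) < ⊤)
          · exact (by norm_num : (2:ENNReal) < ⊤)
  calc ∑' p : {t : ℤ × ℤ × ℤ // t.2.1 ≠ 0 ∧ 4 * M * (|t.2.2| : ℝ) < (|t.2.1| : ℝ)},
      (volume (Δ p.1)) ^ s
      ≤ ∑' p : {t : ℤ × ℤ × ℤ // t.2.1 ≠ 0 ∧ 4 * M * (|t.2.2| : ℝ) < (|t.2.1| : ℝ)},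
        (G₁ p.1 + G₂ p.1) := ENNReal.tsum_le_tsum hpt
    _ ≤ ∑' t : ℤ × ℤ × ℤ, (G₁ t + G₂ t) :=
        ENNReal.tsum_comp_le_tsum_of_injective Subtype.val_injective _
    _ = ∑' t : ℤ × ℤ × ℤ, G₁ t + ∑' t : ℤ × ℤ × ℤ, G₂ t := ENNReal.tsum_add
    _ < ⊤ := ENNReal.add_lt_top.mpr ⟨hG₁sum, hG₂sum⟩
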